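/- For n ≥ 3, the operator LT on (ℝ³)^{⊗n} has 1 as an eigenvalue, its eigenspace {x : LT·x = x} equals span{v₁₂^{⊗n}, v₁₃^{⊗n}} (in particular the eigenvalue 1 has geometric multiplicity 2), and every complex eigenvalue λ of LT with λ ≠ 1 satisfies |λ| < 1. -/

import Mathlib

open Matrix

/-- The blocks `B₁, B₂, B₃` of `EM`. -/
noncomputable def Bblk : Fin 3 → Matrix (Fin 3) (Fin 3) ℝ :=
  ![(1 / 4 : ℝ) • !![3, 1, 1; 1, 3, -1; 1, -1, 3],
    (1 / 4 : ℝ) • !![1, 3, 0; 3, 1, 0; -1, 1, 0],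
    (1 / 4 : ℝ) • !![1, 0, 3; -1, 0, 1; 3, 0, 1]]

/-- `EM = diag(B₁, B₂, B₃)` as a linear map on `ℝ³ ⊗ ℝ³` (basis indexed by pairs, via
`e_i ⊗ e_j ↦ e_{3(i−1)+j}`). -/
noncomputable def EM : Matrix (Fin 3 × Fin 3) (Fin 3 × Fin 3) ℝ :=
  fun p q => if p.1 = q.1 then Bblk p.1 p.2 q.2 else 0

/-- `EM_{i,j}`: the operator on `(ℝ³)^{⊗n}` acting as `EM` on the `i`-th and `j`-th tensor
factors (in that order) and as the identity elsewhere. -/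
noncomputable def EMop (n : ℕ) (i j : Fin n) :
    Matrix (Fin n → Fin 3) (Fin n → Fin 3) ℝ :=
  fun x y => EM (x i, x j) (y i, y j) *
    ∏ k ∈ Finset.univ.filter fun k => k ≠ i ∧ k ≠ j, (if x k = y k then (1 : ℝ) else 0)

/-- The `n`-fold tensor power `v^{⊗n}` of `v ∈ ℝ³`. -/
def tpow (n : ℕ) (v : Fin 3 → ℝ) : (Fin n → Fin 3) → ℝ := fun x => ∏ k, v (x k)

def v12 : Fin 3 → ℝ := ![1, 1, 0]
def v13 : Fin 3 → ℝ := ![1, 0, 1]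

open Complex

noncomputable def EMC : Matrix (Fin 3 × Fin 3) (Fin 3 × Fin 3) ℂ := EM.map Complex.ofReal

noncomputable def Qform (u : Fin 3 × Fin 3 → ℂ) : ℝ :=
  (5/16) * normSq (u (0,0) - u (0,1) - u (0,2))
  + ((5/16) * normSq (u (1,0) - u (1,1)) + normSq (u (1,2)))
  + ((5/16) * normSq (u (2,0) - u (2,2)) + normSq (u (2,1)))

lemma emv00 (u : Fin 3 × Fin 3 → ℂ) : (EMC.mulVec u) (0,0) = ((3/4 : ℝ) : ℂ) * u (0,0) + ((1/4 : ℝ) : ℂ) * u (0,1) + ((1/4 : ℝ) : ℂ) * u (0,2) := by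
  simp [EMC, EM, Bblk, Matrix.mulVec, dotProduct, Fintype.sum_prod_type, Fin.sum_univ_three]
  norm_num

lemma emv01 (u : Fin 3 × Fin 3 → ℂ) : (EMC.mulVec u) (0,1) = ((1/4 : ℝ) : ℂ) * u (0,0) + ((3/4 : ℝ) : ℂ) * u (0,1) + ((-1/4 : ℝ) : ℂ) * u (0,2) := by
  simp [EMC, EM, Bblk, Matrix.mulVec, dotProduct, Fintype.sum_prod_type, Fin.sum_univ_three]
  norm_num

lemma emv02 (u : Fin 3 × Fin 3 → ℂ) : (EMC.mulVec u) (0,2) = ((1/4 : ℝ) : ℂ) * u (0,0) + ((-1/4 : ℝ) : ℂ) * u (0,1) + ((3/4 : ℝ) : ℂ) * u (0,2) := by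
  simp [EMC, EM, Bblk, Matrix.mulVec, dotProduct, Fintype.sum_prod_type, Fin.sum_univ_three]
  norm_num

lemma emv10 (u : Fin 3 × Fin 3 → ℂ) : (EMC.mulVec u) (1,0) = ((1/4 : ℝ) : ℂ) * u (1,0) + ((3/4 : ℝ) : ℂ) * u (1,1) + ((0 : ℝ) : ℂ) * u (1,2) := by
  simp [EMC, EM, Bblk, Matrix.mulVec, dotProduct, Fintype.sum_prod_type, Fin.sum_univ_three]
  norm_num

lemma emv11 (u : Fin 3 × Fin 3 → ℂ) : (EMC.mulVec u) (1,1) = ((3/4 : ℝ) : ℂ) * u (1,0) + ((1/4 : ℝ) : ℂ) * u (1,1) + ((0 : ℝ) : ℂ) * u (1,2) := by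
  simp [EMC, EM, Bblk, Matrix.mulVec, dotProduct, Fintype.sum_prod_type, Fin.sum_univ_three]
  norm_num

lemma emv12 (u : Fin 3 × Fin 3 → ℂ) : (EMC.mulVec u) (1,2) = ((-1/4 : ℝ) : ℂ) * u (1,0) + ((1/4 : ℝ) : ℂ) * u (1,1) + ((0 : ℝ) : ℂ) * u (1,2) := by
  simp [EMC, EM, Bblk, Matrix.mulVec, dotProduct, Fintype.sum_prod_type, Fin.sum_univ_three]
  norm_num

lemma emv20 (u : Fin 3 × Fin 3 → ℂ) : (EMC.mulVec u) (2,0) = ((1/4 : ℝ) : ℂ) * u (2,0) + ((0 : ℝ) : ℂ) * u (2,1) + ((3/4 : ℝ) : ℂ) * u (2,2) := by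
  simp [EMC, EM, Bblk, Matrix.mulVec, dotProduct, Fintype.sum_prod_type, Fin.sum_univ_three]
  norm_num

lemma emv21 (u : Fin 3 × Fin 3 → ℂ) : (EMC.mulVec u) (2,1) = ((-1/4 : ℝ) : ℂ) * u (2,0) + ((0 : ℝ) : ℂ) * u (2,1) + ((1/4 : ℝ) : ℂ) * u (2,2) := by
  simp [EMC, EM, Bblk, Matrix.mulVec, dotProduct, Fintype.sum_prod_type, Fin.sum_univ_three]
  norm_num

lemma emv22 (u : Fin 3 × Fin 3 → ℂ) : (EMC.mulVec u) (2,2) = ((3/4 : ℝ) : ℂ) * u (2,0) + ((0 : ℝ) : ℂ) * u (2,1) + ((1/4 : ℝ) : ℂ) * u (2,2) := by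
  simp [EMC, EM, Bblk, Matrix.mulVec, dotProduct, Fintype.sum_prod_type, Fin.sum_univ_three]
  norm_num

set_option maxHeartbeats 1000000 in
lemma nine (u : Fin 3 × Fin 3 → ℂ) :
    (∑ p : Fin 3 × Fin 3, normSq (u p))
      - ∑ p : Fin 3 × Fin 3, normSq ((EMC.mulVec u) p) = Qform u := by
  simp only [Fintype.sum_prod_type, Fin.sum_univ_three]
  rw [emv00, emv01, emv02, emv10, emv11, emv12, emv20, emv21, emv22]
  norm_num [Qform, Complex.normSq_apply, Complex.add_re, Complex.add_im,
    Complex.mul_re, Complex.mul_im, Complex.ofReal_re, Complex.ofReal_im,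
    Complex.sub_re, Complex.sub_im]
  ring

/-- The equality conditions for a slice. -/
def SliceCond (u : Fin 3 × Fin 3 → ℂ) : Prop :=
  u (0,0) = u (0,1) + u (0,2) ∧ u (1,0) = u (1,1) ∧ u (1,2) = 0 ∧ u (2,0) = u (2,2) ∧ u (2,1) = 0

lemma qform_nonneg (u : Fin 3 × Fin 3 → ℂ) : 0 ≤ Qform u := by
  unfold Qform
  linarith [Complex.normSq_nonneg (u (0,0) - u (0,1) - u (0,2)),
    Complex.normSq_nonneg (u (1,0) - u (1,1)), Complex.normSq_nonneg (u (1,2)),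
    Complex.normSq_nonneg (u (2,0) - u (2,2)), Complex.normSq_nonneg (u (2,1))]

lemma qform_eq_zero (u : Fin 3 × Fin 3 → ℂ) (h : Qform u = 0) : SliceCond u := by
  unfold Qform at h
  have h1 : normSq (u (0,0) - u (0,1) - u (0,2)) = 0 := by
    nlinarith [Complex.normSq_nonneg (u (0,0) - u (0,1) - u (0,2)),
      Complex.normSq_nonneg (u (1,0) - u (1,1)), Complex.normSq_nonneg (u (1,2)),
      Complex.normSq_nonneg (u (2,0) - u (2,2)), Complex.normSq_nonneg (u (2,1))]
  have h2 : normSq (u (1,0) - u (1,1)) = 0 := by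
    nlinarith [Complex.normSq_nonneg (u (0,0) - u (0,1) - u (0,2)),
      Complex.normSq_nonneg (u (1,0) - u (1,1)), Complex.normSq_nonneg (u (1,2)),
      Complex.normSq_nonneg (u (2,0) - u (2,2)), Complex.normSq_nonneg (u (2,1))]
  have h3 : normSq (u (1,2)) = 0 := by
    nlinarith [Complex.normSq_nonneg (u (0,0) - u (0,1) - u (0,2)),
      Complex.normSq_nonneg (u (1,0) - u (1,1)), Complex.normSq_nonneg (u (1,2)),
      Complex.normSq_nonneg (u (2,0) - u (2,2)), Complex.normSq_nonneg (u (2,1))]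
  have h4 : normSq (u (2,0) - u (2,2)) = 0 := by
    nlinarith [Complex.normSq_nonneg (u (0,0) - u (0,1) - u (0,2)),
      Complex.normSq_nonneg (u (1,0) - u (1,1)), Complex.normSq_nonneg (u (1,2)),
      Complex.normSq_nonneg (u (2,0) - u (2,2)), Complex.normSq_nonneg (u (2,1))]
  have h5 : normSq (u (2,1)) = 0 := by
    nlinarith [Complex.normSq_nonneg (u (0,0) - u (0,1) - u (0,2)),
      Complex.normSq_nonneg (u (1,0) - u (1,1)), Complex.normSq_nonneg (u (1,2)),
      Complex.normSq_nonneg (u (2,0) - u (2,2)), Complex.normSq_nonneg (u (2,1))]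
  rw [Complex.normSq_eq_zero] at h1 h2 h3 h4 h5
  refine ⟨by linear_combination h1, by linear_combination h2, h3, by linear_combination h4, h5⟩

lemma slice_fix (u : Fin 3 × Fin 3 → ℂ) (h : SliceCond u) : EMC.mulVec u = u := by
  obtain ⟨h1, h2, h3, h4, h5⟩ := h
  funext p
  obtain ⟨a, b⟩ := p
  fin_cases a <;> fin_cases b
  · show EMC.mulVec u (0,0) = u (0,0); rw [emv00, h1]; push_cast; ring
  · show EMC.mulVec u (0,1) = u (0,1); rw [emv01, h1]; push_cast; ring
  · show EMC.mulVec u (0,2) = u (0,2); rw [emv02, h1]; push_cast; ring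
  · show EMC.mulVec u (1,0) = u (1,0); rw [emv10, h2]; push_cast; ring
  · show EMC.mulVec u (1,1) = u (1,1); rw [emv11, h2]; push_cast; ring
  · show EMC.mulVec u (1,2) = u (1,2); rw [emv12, h2, h3]; push_cast; ring
  · show EMC.mulVec u (2,0) = u (2,0); rw [emv20, h4]; push_cast; ring
  · show EMC.mulVec u (2,1) = u (2,1); rw [emv21, h4, h5]; push_cast; ring
  · show EMC.mulVec u (2,2) = u (2,2); rw [emv22, h4]; push_cast; ring

noncomputable def EMop' (n : ℕ) (i j : Fin n) :
    Matrix (Fin n → Fin 3) (Fin n → Fin 3) ℝ :=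
  fun x y => EM (x i, x j) (y i, y j) *
    ∏ k ∈ Finset.univ.filter fun k => k ≠ i ∧ k ≠ j, (if x k = y k then (1 : ℝ) else 0)

section UPD
variable {n : ℕ} (i j : Fin n)

/-- Update `y` at positions `i, j` to values `a, b`. -/
def U (y : Fin n → Fin 3) (a b : Fin 3) : Fin n → Fin 3 :=
  fun k => if k = i then a else if k = j then b else y k

lemma U_at_i (y : Fin n → Fin 3) (a b : Fin 3) : U i j y a b i = a := if_pos rfl

lemma U_at_j (hij : i ≠ j) (y : Fin n → Fin 3) (a b : Fin 3) : U i j y a b j = b := by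
  unfold U; rw [if_neg (Ne.symm hij), if_pos rfl]

lemma U_at_other (y : Fin n → Fin 3) (a b : Fin 3) {k : Fin n} (h1 : k ≠ i) (h2 : k ≠ j) :
    U i j y a b k = y k := by
  unfold U; rw [if_neg h1, if_neg h2]

lemma U_self (y : Fin n → Fin 3) : U i j y (y i) (y j) = y := by
  funext k; unfold U
  split_ifs with h h'
  · subst h; rfl
  · subst h'; rfl
  · rfl

lemma U_U (y : Fin n → Fin 3) (a b c d : Fin 3) : U i j (U i j y a b) c d = U i j y c d := by
  funext k; unfold U
  split_ifs with h h'
  · rfl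
  · rfl
  · rfl

/-- Splitting of configuration space at the coordinates `i ≠ j`. -/
def Eqv (hij : i ≠ j) : (Fin n → Fin 3) ≃ (Fin 3 × Fin 3) × ({k : Fin n // k ≠ i ∧ k ≠ j} → Fin 3) where
  toFun z := ((z i, z j), fun k => z k.1)
  invFun pw := fun k =>
    if h1 : k = i then pw.1.1 else if h2 : k = j then pw.1.2 else pw.2 ⟨k, h1, h2⟩
  left_inv z := by
    funext k
    by_cases h1 : k = i
    · subst h1; simp
    · by_cases h2 : k = j
      · subst h2; simp [Ne.symm hij]
      · simp [h1, h2]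
  right_inv pw := by
    obtain ⟨⟨a, b⟩, w⟩ := pw
    refine Prod.ext (Prod.ext ?_ ?_) (funext fun k => ?_)
    · show (if h1 : i = i then a else _) = a
      rw [dif_pos rfl]
    · show (if h1 : j = i then a else if h2 : j = j then b else _) = b
      rw [dif_neg (Ne.symm hij), dif_pos rfl]
    · show (if h1 : k.1 = i then a else if h2 : k.1 = j then b else w ⟨k.1, h1, h2⟩) = w k
      rw [dif_neg k.2.1, dif_neg k.2.2]

lemma Eqv_symm_eq_U (hij : i ≠ j) (y : Fin n → Fin 3) (p : Fin 3 × Fin 3) :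
    (Eqv i j hij).symm (p, fun k => y k.1) = U i j y p.1 p.2 := by
  funext k
  show (if h1 : k = i then p.1 else if h2 : k = j then p.2 else y k) = _
  unfold U
  split_ifs <;> rfl

lemma Eqv_symm_fst (hij : i ≠ j) (p w) : ((Eqv i j hij).symm (p, w)) i = p.1 := by
  show (if h1 : i = i then p.1 else _) = p.1
  rw [dif_pos rfl]

lemma Eqv_symm_snd (hij : i ≠ j) (p w) : ((Eqv i j hij).symm (p, w)) j = p.2 := by
  show (if h1 : j = i then p.1 else if _ : j = j then p.2 else _) = p.2
  rw [dif_neg (Ne.symm hij), dif_pos rfl]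

lemma Eqv_symm_other (hij : i ≠ j) (p w) (k : {k : Fin n // k ≠ i ∧ k ≠ j}) :
    ((Eqv i j hij).symm (p, w)) k.1 = w k := by
  show (if h1 : k.1 = i then p.1 else if h2 : k.1 = j then p.2 else w ⟨k.1, h1, h2⟩) = w k
  rw [dif_neg k.2.1, dif_neg k.2.2]

lemma Eqv_symm_U (hij : i ≠ j) (p q : Fin 3 × Fin 3) (w) :
    U i j ((Eqv i j hij).symm (p, w)) q.1 q.2 = (Eqv i j hij).symm (q, w) := by
  funext k
  by_cases h1 : k = i
  · rw [h1, U_at_i, Eqv_symm_fst]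
  · by_cases h2 : k = j
    · rw [h2, U_at_j i j hij, Eqv_symm_snd]
    · rw [U_at_other i j _ _ _ h1 h2,
        Eqv_symm_other i j hij p w ⟨k, h1, h2⟩, Eqv_symm_other i j hij q w ⟨k, h1, h2⟩]

/-- The key mulVec formula for `EMop`. -/
lemma ML {K : Type} [CommRing K] (hij : i ≠ j) (f : ℝ →+* K) (x : (Fin n → Fin 3) → K)
    (y : Fin n → Fin 3) :
    (((EMop' n i j).map f).mulVec x) y
      = ∑ p : Fin 3 × Fin 3, f (EM (y i, y j) p) * x (U i j y p.1 p.2) := by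
  have key : ∀ z : Fin n → Fin 3,
      ((EMop' n i j).map f) y z * x z
        = if z = U i j y (z i) (z j) then f (EM (y i, y j) (z i, z j)) * x z else 0 := by
    intro z
    have hprod : (∏ k ∈ Finset.univ.filter fun k => k ≠ i ∧ k ≠ j,
        (if y k = z k then (1 : ℝ) else 0)) = if z = U i j y (z i) (z j) then 1 else 0 := by
      rw [Finset.prod_boole]
      congr 1
      simp only [eq_iff_iff]
      constructor
      · intro h
        funext k
        by_cases h1 : k = i
        · rw [h1, U_at_i]
        · by_cases h2 : k = j
          · rw [h2, U_at_j i j hij]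
          · rw [U_at_other i j _ _ _ h1 h2]
            exact (h k (by simp [h1, h2])).symm
      · intro h k hk
        simp only [Finset.mem_filter, Finset.mem_univ, true_and] at hk
        conv_rhs => rw [h]
        rw [U_at_other i j _ _ _ hk.1 hk.2]
    simp only [Matrix.map_apply, EMop']
    rw [hprod, _root_.map_mul, apply_ite f, _root_.map_one, _root_.map_zero]
    split_ifs <;> ring
  have h0 : (((EMop' n i j).map f).mulVec x) y = ∑ z, ((EMop' n i j).map f) y z * x z := rfl
  rw [h0, Finset.sum_congr rfl fun z _ => key z, ← Finset.sum_filter]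
  refine Finset.sum_nbij' (fun z => ((z i, z j) : Fin 3 × Fin 3)) (fun p => U i j y p.1 p.2)
    (fun _ _ => Finset.mem_univ _) ?_ ?_ ?_ ?_
  · intro p _
    simp only [Finset.mem_filter, Finset.mem_univ, true_and, U_at_i, U_at_j i j hij, U_U]
  · intro z hz
    simp only [Finset.mem_filter, Finset.mem_univ, true_and] at hz
    exact hz.symm
  · intro p _
    simp only [U_at_i, U_at_j i j hij]
  · intro z hz
    simp only [Finset.mem_filter, Finset.mem_univ, true_and] at hz
    rw [← hz]

end UPD

section STEP
variable {n : ℕ} (i j : Fin n) (hij : i ≠ j)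

/-- Squared ℓ² norm. -/
noncomputable def S (x : (Fin n → Fin 3) → ℂ) : ℝ := ∑ y, Complex.normSq (x y)

/-- The conditions cutting out the isometric subspace of `EM_{i,j}`. -/
def Cond (x : (Fin n → Fin 3) → ℂ) : Prop :=
  ∀ y : Fin n → Fin 3, SliceCond (fun p => x (U i j y p.1 p.2))

noncomputable def Mc : Matrix (Fin n → Fin 3) (Fin n → Fin 3) ℂ :=
  (EMop' n i j).map Complex.ofReal

lemma S_nonneg (x : (Fin n → Fin 3) → ℂ) : 0 ≤ S x :=
  Finset.sum_nonneg fun _ _ => Complex.normSq_nonneg _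

lemma S_pos (x : (Fin n → Fin 3) → ℂ) (hx : x ≠ 0) : 0 < S x := by
  obtain ⟨y, hy⟩ : ∃ y, x y ≠ 0 := by
    by_contra h
    push_neg at h
    exact hx (funext h)
  have : 0 < Complex.normSq (x y) := Complex.normSq_pos.2 hy
  exact lt_of_lt_of_le this (Finset.single_le_sum (fun _ _ => Complex.normSq_nonneg _)
    (Finset.mem_univ y))

lemma S_smul (c : ℂ) (x : (Fin n → Fin 3) → ℂ) : S (c • x) = Complex.normSq c * S x := by
  unfold S
  rw [Finset.mul_sum]
  refine Finset.sum_congr rfl fun y _ => ?_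
  simp [Complex.normSq_mul]

lemma sum_decomp (g : (Fin n → Fin 3) → ℝ) :
    ∑ z, g z = ∑ w : {k : Fin n // k ≠ i ∧ k ≠ j} → Fin 3,
      ∑ p : Fin 3 × Fin 3, g ((Eqv i j hij).symm (p, w)) := by
  rw [← Equiv.sum_comp (Eqv i j hij).symm g, Fintype.sum_prod_type]
  exact Finset.sum_comm

lemma mc_apply (x : (Fin n → Fin 3) → ℂ) (p : Fin 3 × Fin 3)
    (w : {k : Fin n // k ≠ i ∧ k ≠ j} → Fin 3) :
    ((Mc i j).mulVec x) ((Eqv i j hij).symm (p, w))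
      = (EMC.mulVec (fun q => x ((Eqv i j hij).symm (q, w)))) p := by
  show (((EMop' n i j).map Complex.ofRealHom).mulVec x) _ = _
  rw [ML i j hij]
  have h1 : ∀ q : Fin 3 × Fin 3, U i j ((Eqv i j hij).symm (p, w)) q.1 q.2
      = (Eqv i j hij).symm (q, w) := fun q => Eqv_symm_U i j hij p q w
  simp only [h1, Eqv_symm_fst i j hij, Eqv_symm_snd i j hij]
  unfold EMC Matrix.mulVec dotProduct
  refine Finset.sum_congr rfl fun q _ => ?_
  simp [Matrix.map_apply]

lemma defect (x : (Fin n → Fin 3) → ℂ) :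
    S x - S ((Mc i j).mulVec x)
      = ∑ w : {k : Fin n // k ≠ i ∧ k ≠ j} → Fin 3,
          Qform (fun q => x ((Eqv i j hij).symm (q, w))) := by
  unfold S
  rw [sum_decomp i j hij (fun z => Complex.normSq (x z)),
    sum_decomp i j hij (fun z => Complex.normSq (((Mc i j).mulVec x) z)), ← Finset.sum_sub_distrib]
  refine Finset.sum_congr rfl fun w _ => ?_
  rw [← nine (fun q => x ((Eqv i j hij).symm (q, w)))]
  congr 1
  exact Finset.sum_congr rfl fun p _ => by rw [mc_apply i j hij]

include hij in
lemma step_le (x : (Fin n → Fin 3) → ℂ) : S ((Mc i j).mulVec x) ≤ S x := by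
  have h := defect i j hij x
  have h2 : 0 ≤ S x - S ((Mc i j).mulVec x) := by
    rw [h]
    exact Finset.sum_nonneg fun w _ => qform_nonneg _
  linarith

include hij in
lemma step_eq (x : (Fin n → Fin 3) → ℂ) (hx : S ((Mc i j).mulVec x) = S x) :
    Cond i j x ∧ (Mc i j).mulVec x = x := by
  have h := defect i j hij x
  rw [hx, sub_self] at h
  have hz : ∀ w, Qform (fun q => x ((Eqv i j hij).symm (q, w))) = 0 := by
    intro w
    have := (Finset.sum_eq_zero_iff_of_nonneg fun w _ => qform_nonneg
      (fun q => x ((Eqv i j hij).symm (q, w)))).1 h.symm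
    exact this w (Finset.mem_univ _)
  have hcond : Cond i j x := by
    intro y
    have := qform_eq_zero _ (hz (fun k => y k.1))
    have heq : (fun q : Fin 3 × Fin 3 => x ((Eqv i j hij).symm (q, fun k => y k.1)))
        = fun q => x (U i j y q.1 q.2) := by
      funext q
      rw [Eqv_symm_eq_U i j hij]
    rwa [heq] at this
  refine ⟨hcond, funext fun y => ?_⟩
  have hy : y = (Eqv i j hij).symm (((y i, y j)), fun k => y k.1) := by
    rw [Eqv_symm_eq_U i j hij]
    exact (U_self i j y).symm
  conv_lhs => rw [hy]
  rw [mc_apply i j hij, slice_fix _ ?sc]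
  case sc =>
    have := qform_eq_zero _ (hz (fun k => y k.1))
    exact this
  rw [← hy]

end STEP

section CHAIN
variable {n : ℕ}

lemma chain (L : List (Matrix (Fin n → Fin 3) (Fin n → Fin 3) ℂ))
    (h : ∀ A ∈ L, (∀ x, S (A.mulVec x) ≤ S x) ∧ (∀ x, S (A.mulVec x) = S x → A.mulVec x = x))
    (x : (Fin n → Fin 3) → ℂ) :
    S (L.prod.mulVec x) ≤ S x ∧
      (S (L.prod.mulVec x) = S x → L.prod.mulVec x = x ∧ ∀ A ∈ L, A.mulVec x = x) := by
  induction L with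
  | nil =>
    exact ⟨by simp, fun _ => ⟨by simp, by simp⟩⟩
  | cons A L ih =>
    have hA := h A (List.mem_cons_self)
    have hL : ∀ B ∈ L, _ := fun B hB => h B (List.mem_cons_of_mem _ hB)
    obtain ⟨ih1, ih2⟩ := ih hL
    rw [List.prod_cons, ← Matrix.mulVec_mulVec]
    set z := L.prod.mulVec x with hz
    have h1 : S (A.mulVec z) ≤ S z := hA.1 z
    constructor
    · exact le_trans h1 ih1
    · intro heq
      have hSz : S z = S x := le_antisymm ih1 (by linarith)
      have hAz : S (A.mulVec z) = S z := by linarith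
      obtain ⟨hzx, hall⟩ := ih2 hSz
      rw [hzx] at hAz ⊢
      have hfix := hA.2 x hAz
      exact ⟨hfix, fun B hB => by
        rcases List.mem_cons.1 hB with rfl | hB'
        · exact hfix
        · exact hall B hB'⟩

end CHAIN

open Fin.NatCast

section FINFACTS
variable {n : ℕ} [NeZero n]

lemma fin_one_val (hn : 3 ≤ n) : ((⟨1, Nat.lt_of_lt_of_le (by decide) hn⟩ : Fin n) : Fin n) = (1 : Fin n) := by
  apply Fin.ext
  show 1 = (1 : Fin n).val
  rw [Fin.val_one', Nat.mod_eq_of_lt (by omega)]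

lemma exists_shift (i k : Fin n) : ∃ m : ℕ, m < n ∧ k = i + (m : Fin n) := by
  refine ⟨(k - i).val, (k - i).isLt, ?_⟩
  rw [Fin.cast_val_eq_self]
  abel

lemma shift_ne (i : Fin n) {m : ℕ} (h1 : 0 < m) (h2 : m < n) : i + (m : Fin n) ≠ i := by
  intro h
  have h0 : (m : Fin n) = 0 := by
    have := congrArg (fun z => z - i) h
    simpa [add_comm, add_sub_cancel_right] using this
  have hv : (m : Fin n).val = m % n := Fin.val_natCast m n
  rw [h0, Nat.mod_eq_of_lt h2] at hv
  simp only [Fin.val_zero] at hv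
  omega

end FINFACTS

def tpow' (n : ℕ) (v : Fin 3 → ℝ) : (Fin n → Fin 3) → ℝ := fun x => ∏ k, v (x k)
def v12' : Fin 3 → ℝ := ![1, 1, 0]
def v13' : Fin 3 → ℝ := ![1, 0, 1]

/-- Real version of the fixed-slice conditions. -/
def CondR {n : ℕ} (i j : Fin n) (x : (Fin n → Fin 3) → ℝ) : Prop :=
  ∀ y : Fin n → Fin 3,
    x (U i j y 0 0) = x (U i j y 0 1) + x (U i j y 0 2) ∧
    x (U i j y 1 0) = x (U i j y 1 1) ∧ x (U i j y 1 2) = 0 ∧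
    x (U i j y 2 0) = x (U i j y 2 2) ∧ x (U i j y 2 1) = 0

section COMB
variable {n : ℕ} [NeZero n]

lemma U_eq_self {i j : Fin n} {y : Fin n → Fin 3} {a b : Fin 3}
    (ha : y i = a) (hb : y j = b) : U i j y a b = y := by
  funext k
  unfold U
  split_ifs with h h'
  · rw [h, ha]
  · rw [h', hb]
  · rfl

lemma fin3_cases (e : Fin 3) : e = 0 ∨ e = 1 ∨ e = 2 := by
  fin_cases e <;> simp

lemma succ_ne (hn : 3 ≤ n) (i : Fin n) : i ≠ i + 1 := by
  have h := shift_ne i (m := 1) one_pos (by omega)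
  rw [Nat.cast_one] at h
  exact h.symm

variable (hn : 3 ≤ n) {x : (Fin n → Fin 3) → ℝ}
  (hC : ∀ i : Fin n, CondR i (i + 1) x)

include hn hC

/-- Propagation inside `{0,1}`-configurations. -/
lemma L1 : ∀ d : ℕ, ∀ y : Fin n → Fin 3,
    (Finset.univ.filter fun k => y k = 0).card ≤ d →
    (∀ k, y k ≠ 2) → (∃ k, y k = 1) → x y = x (fun _ => 1) := by
  intro d
  induction d with
  | zero =>
    intro y hcard _h2 _h1
    have hz : ∀ k, y k ≠ 0 := by
      intro k hk
      have : k ∈ Finset.univ.filter fun k => y k = 0 := by simp [hk]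
      have := Finset.card_pos.2 ⟨k, this⟩
      omega
    have : y = fun _ => 1 := by
      funext k
      rcases fin3_cases (y k) with h | h | h
      · exact absurd h (hz k)
      · exact h
      · exact absurd h (_h2 k)
    rw [this]
  | succ d ih =>
    intro y hcard h2 h1
    by_cases hz : ∀ k, y k ≠ 0
    · have : y = fun _ => 1 := by
        funext k
        rcases fin3_cases (y k) with h | h | h
        · exact absurd h (hz k)
        · exact h
        · exact absurd h (h2 k)
      rw [this]
    · push_neg at hz
      obtain ⟨k0, hk0⟩ := hz
      -- find adjacent (1, 0)
      have hadj : ∃ i : Fin n, y i = 1 ∧ y (i + 1) = 0 := by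
        by_contra hno
        push_neg at hno
        obtain ⟨k1, hk1⟩ := h1
        have hall : ∀ m : ℕ, y (k1 + (m : Fin n)) = 1 := by
          intro m
          induction m with
          | zero => simpa using hk1
          | succ m ihm =>
            have harith : k1 + ((m + 1 : ℕ) : Fin n) = (k1 + (m : Fin n)) + 1 := by
              push_cast
              abel
            rw [harith]
            rcases fin3_cases (y (k1 + (m : Fin n) + 1)) with h | h | h
            · exact absurd h (hno _ ihm)
            · exact h
            · exact absurd h (h2 _)
        obtain ⟨m, _, hm⟩ := exists_shift k1 k0
        rw [hm, hall m] at hk0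
        exact absurd hk0 (by decide)
      obtain ⟨i, hi1, hi0⟩ := hadj
      have hij := succ_ne hn i
      set j := i + 1 with hjdef
      have hstep : x y = x (U i j y 1 1) := by
        have h := (hC i y).2.1
        rwa [U_eq_self hi1 hi0] at h
      rw [hstep]
      set y' := U i j y 1 1 with hy'
      have hy'vals : ∀ k, k ≠ i → k ≠ j → y' k = y k := fun k h1' h2' =>
        U_at_other i j y 1 1 h1' h2'
      have hy'i : y' i = 1 := U_at_i i j y 1 1
      have hy'j : y' j = 1 := U_at_j i j hij y 1 1
      have hcard' : (Finset.univ.filter fun k => y' k = 0).card ≤ d := by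
        have hsub : (Finset.univ.filter fun k => y' k = 0)
            = (Finset.univ.filter fun k => y k = 0).erase j := by
          ext k
          simp only [Finset.mem_filter, Finset.mem_univ, true_and, Finset.mem_erase]
          constructor
          · intro hk
            by_cases h1' : k = i
            · rw [h1', hy'i] at hk; exact absurd hk (by decide)
            · by_cases h2' : k = j
              · rw [h2', hy'j] at hk; exact absurd hk (by decide)
              · exact ⟨h2', by rwa [hy'vals k h1' h2'] at hk⟩
          · intro ⟨hkj, hk⟩
            by_cases h1' : k = i
            · rw [h1'] at hk; rw [hk] at hi1; exact absurd hi1 (by decide)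
            · rwa [hy'vals k h1' hkj]
        rw [hsub, Finset.card_erase_of_mem (by simp [hi0])]
        omega
      exact ih y' hcard' (fun k => by
          by_cases h1' : k = i
          · rw [h1', hy'i]; decide
          · by_cases h2' : k = j
            · rw [h2', hy'j]; decide
            · rw [hy'vals k h1' h2']; exact h2 k)
        ⟨i, hy'i⟩

/-- Propagation inside `{0,2}`-configurations. -/
lemma L2 : ∀ d : ℕ, ∀ y : Fin n → Fin 3,
    (Finset.univ.filter fun k => y k = 0).card ≤ d →
    (∀ k, y k ≠ 1) → (∃ k, y k = 2) → x y = x (fun _ => 2) := by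
  intro d
  induction d with
  | zero =>
    intro y hcard _h2 _h1
    have hz : ∀ k, y k ≠ 0 := by
      intro k hk
      have : k ∈ Finset.univ.filter fun k => y k = 0 := by simp [hk]
      have := Finset.card_pos.2 ⟨k, this⟩
      omega
    have : y = fun _ => 2 := by
      funext k
      rcases fin3_cases (y k) with h | h | h
      · exact absurd h (hz k)
      · exact absurd h (_h2 k)
      · exact h
    rw [this]
  | succ d ih =>
    intro y hcard h2 h1
    by_cases hz : ∀ k, y k ≠ 0
    · have : y = fun _ => 2 := by
        funext k
        rcases fin3_cases (y k) with h | h | h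
        · exact absurd h (hz k)
        · exact absurd h (h2 k)
        · exact h
      rw [this]
    · push_neg at hz
      obtain ⟨k0, hk0⟩ := hz
      have hadj : ∃ i : Fin n, y i = 2 ∧ y (i + 1) = 0 := by
        by_contra hno
        push_neg at hno
        obtain ⟨k1, hk1⟩ := h1
        have hall : ∀ m : ℕ, y (k1 + (m : Fin n)) = 2 := by
          intro m
          induction m with
          | zero => simpa using hk1
          | succ m ihm =>
            have harith : k1 + ((m + 1 : ℕ) : Fin n) = (k1 + (m : Fin n)) + 1 := by
              push_cast
              abel
            rw [harith]
            rcases fin3_cases (y (k1 + (m : Fin n) + 1)) with h | h | h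
            · exact absurd h (hno _ ihm)
            · exact absurd h (h2 _)
            · exact h
        obtain ⟨m, _, hm⟩ := exists_shift k1 k0
        rw [hm, hall m] at hk0
        exact absurd hk0 (by decide)
      obtain ⟨i, hi1, hi0⟩ := hadj
      have hij := succ_ne hn i
      set j := i + 1 with hjdef
      have hstep : x y = x (U i j y 2 2) := by
        have h := (hC i y).2.2.2.1
        rwa [U_eq_self hi1 hi0] at h
      rw [hstep]
      set y' := U i j y 2 2 with hy'
      have hy'vals : ∀ k, k ≠ i → k ≠ j → y' k = y k := fun k h1' h2' =>
        U_at_other i j y 2 2 h1' h2'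
      have hy'i : y' i = 2 := U_at_i i j y 2 2
      have hy'j : y' j = 2 := U_at_j i j hij y 2 2
      have hcard' : (Finset.univ.filter fun k => y' k = 0).card ≤ d := by
        have hsub : (Finset.univ.filter fun k => y' k = 0)
            = (Finset.univ.filter fun k => y k = 0).erase j := by
          ext k
          simp only [Finset.mem_filter, Finset.mem_univ, true_and, Finset.mem_erase]
          constructor
          · intro hk
            by_cases h1' : k = i
            · rw [h1', hy'i] at hk; exact absurd hk (by decide)
            · by_cases h2' : k = j
              · rw [h2', hy'j] at hk; exact absurd hk (by decide)
              · exact ⟨h2', by rwa [hy'vals k h1' h2'] at hk⟩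
          · intro ⟨hkj, hk⟩
            by_cases h1' : k = i
            · rw [h1'] at hk; rw [hk] at hi1; exact absurd hi1 (by decide)
            · rwa [hy'vals k h1' hkj]
        rw [hsub, Finset.card_erase_of_mem (by simp [hi0])]
        omega
      exact ih y' hcard' (fun k => by
          by_cases h1' : k = i
          · rw [h1', hy'i]; decide
          · by_cases h2' : k = j
            · rw [h2', hy'j]; decide
            · rw [hy'vals k h1' h2']; exact h2 k)
        ⟨i, hy'i⟩

/-- A configuration containing a `1` at distance `m` from a `2` evaluates to zero. -/
lemma L3 : ∀ m : ℕ, ∀ y : Fin n → Fin 3, ∀ i : Fin n, 1 ≤ m → m < n →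
    y i = 1 → y (i + (m : Fin n)) = 2 → x y = 0 := by
  intro m
  induction m with
  | zero => intro y i h1 _ _ _; omega
  | succ m ih =>
    intro y i _h1 h2 hy1 hy2
    have hij := succ_ne hn i
    set j := i + 1 with hjdef
    by_cases hm : m = 0
    · subst hm
      rw [show ((0 + 1 : ℕ) : Fin n) = (1 : Fin n) by push_cast; ring] at hy2
      have h := (hC i y).2.2.1
      rwa [U_eq_self hy1 hy2] at h
    · have hm1 : 1 ≤ m := by omega
      have harith : i + ((m + 1 : ℕ) : Fin n) = j + (m : Fin n) := by
        push_cast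
        rw [hjdef]; abel
      rw [harith] at hy2
      rcases fin3_cases (y j) with hj | hj | hj
      · -- replace the 0 at j with a 1
        have hstep : x y = x (U i j y 1 1) := by
          have h := (hC i y).2.1
          rwa [U_eq_self hy1 hj] at h
        rw [hstep]
        refine ih (U i j y 1 1) j hm1 (by omega) (U_at_j i j hij y 1 1) ?_
        rw [U_at_other i j y 1 1 ?hne1 ?hne2]
        · exact hy2
        case hne1 =>
          rw [hjdef]
          show i + (1 : Fin n) + (m : Fin n) ≠ i
          rw [add_assoc, show (1 : Fin n) + (m : Fin n) = ((m + 1 : ℕ) : Fin n) by push_cast; abel]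
          exact shift_ne i (by omega) h2
        case hne2 => exact shift_ne j hm1 (by omega)
      · exact ih y j hm1 (by omega) hj hy2
      · have h := (hC i y).2.2.1
        rwa [U_eq_self hy1 hj] at h

/-- Mixed configurations evaluate to zero. -/
lemma L3cor (y : Fin n → Fin 3) (h1 : ∃ i, y i = 1) (h2 : ∃ k, y k = 2) : x y = 0 := by
  obtain ⟨i, hi⟩ := h1
  obtain ⟨k, hk⟩ := h2
  obtain ⟨m, hmn, hm⟩ := exists_shift i k
  have hm0 : m ≠ 0 := by
    intro h
    subst h
    rw [Nat.cast_zero, add_zero] at hm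
    rw [hm, hi] at hk
    exact absurd hk (by decide)
  exact L3 hn hC m y i (by omega) hmn hi (by rwa [← hm])

/-- The value at the all-zero configuration. -/
lemma L4 : x (fun _ => 0) = x (fun _ => 1) + x (fun _ => 2) := by
  have i0 : Fin n := ⟨0, by omega⟩
  have hij := succ_ne hn i0
  set j := i0 + 1 with hjdef
  have h := (hC i0 (fun _ => 0)).1
  rw [U_eq_self rfl rfl] at h
  rw [h]
  congr 1
  · -- U i0 j 0⃗ 0 1 : all zeros except a 1 at j
    refine L1 hn hC n _ (le_trans (Finset.card_le_univ _) (by simp)) ?_ ⟨j, U_at_j i0 j hij _ 0 1⟩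
    intro k
    by_cases h1 : k = i0
    · rw [h1, U_at_i]; decide
    · by_cases h2 : k = j
      · rw [h2, U_at_j i0 j hij]; decide
      · rw [U_at_other i0 j _ 0 1 h1 h2]; decide
  · refine L2 hn hC n _ (le_trans (Finset.card_le_univ _) (by simp)) ?_ ⟨j, U_at_j i0 j hij _ 0 2⟩
    intro k
    by_cases h1 : k = i0
    · rw [h1, U_at_i]; decide
    · by_cases h2 : k = j
      · rw [h2, U_at_j i0 j hij]; decide
      · rw [U_at_other i0 j _ 0 2 h1 h2]; decide

omit hn hC in
lemma v12'_vals : v12' 0 = 1 ∧ v12' 1 = 1 ∧ v12' 2 = 0 := by norm_num [v12', Matrix.cons_val_two]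
omit hn hC in
lemma v13'_vals : v13' 0 = 1 ∧ v13' 1 = 0 ∧ v13' 2 = 1 := by norm_num [v13', Matrix.cons_val_two]

/-- The combinatorial classification of common fixed vectors. -/
lemma comb : x = x (fun _ => 1) • tpow' n v12' + x (fun _ => 2) • tpow' n v13' := by
  funext y
  have hne : (Finset.univ : Finset (Fin n)).Nonempty := ⟨⟨0, by omega⟩, Finset.mem_univ _⟩
  simp only [Pi.add_apply, Pi.smul_apply, smul_eq_mul]
  by_cases hp : ∃ k, y k = 1 <;> by_cases hq : ∃ k, y k = 2
  · -- mixed: 0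
    obtain ⟨k1, hk1⟩ := hp
    obtain ⟨k2, hk2⟩ := hq
    rw [L3cor hn hC y ⟨k1, hk1⟩ ⟨k2, hk2⟩]
    rw [show tpow' n v12' y = 0 from Finset.prod_eq_zero (Finset.mem_univ k2)
      (by rw [hk2]; exact v12'_vals.2.2)]
    rw [show tpow' n v13' y = 0 from Finset.prod_eq_zero (Finset.mem_univ k1)
      (by rw [hk1]; exact v13'_vals.2.1)]
    ring
  · -- only ones and zeros
    push_neg at hq
    rw [L1 hn hC n y (le_trans (Finset.card_le_univ _) (by simp)) hq hp]
    obtain ⟨k1, hk1⟩ := hp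
    rw [show tpow' n v12' y = 1 from Finset.prod_eq_one fun k _ => by
      rcases fin3_cases (y k) with h | h | h
      · rw [h]; exact v12'_vals.1
      · rw [h]; exact v12'_vals.2.1
      · exact absurd h (hq k)]
    rw [show tpow' n v13' y = 0 from Finset.prod_eq_zero (Finset.mem_univ k1)
      (by rw [hk1]; exact v13'_vals.2.1)]
    ring
  · push_neg at hp
    rw [L2 hn hC n y (le_trans (Finset.card_le_univ _) (by simp)) hp hq]
    obtain ⟨k2, hk2⟩ := hq
    rw [show tpow' n v13' y = 1 from Finset.prod_eq_one fun k _ => by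
      rcases fin3_cases (y k) with h | h | h
      · rw [h]; exact v13'_vals.1
      · exact absurd h (hp k)
      · rw [h]; exact v13'_vals.2.2]
    rw [show tpow' n v12' y = 0 from Finset.prod_eq_zero (Finset.mem_univ k2)
      (by rw [hk2]; exact v12'_vals.2.2)]
    ring
  · push_neg at hp hq
    have hy0 : y = fun _ => 0 := by
      funext k
      rcases fin3_cases (y k) with h | h | h
      · exact h
      · exact absurd h (hp k)
      · exact absurd h (hq k)
    rw [hy0, L4 hn hC]
    rw [show tpow' n v12' (fun _ => 0) = 1 from Finset.prod_eq_one fun k _ => v12'_vals.1]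
    rw [show tpow' n v13' (fun _ => 0) = 1 from Finset.prod_eq_one fun k _ => v13'_vals.1]
    ring

end COMB

section TPOW

lemma emfix12 (p0 : Fin 3 × Fin 3) :
    (∑ p : Fin 3 × Fin 3, EM p0 p * (v12' p.1 * v12' p.2)) = v12' p0.1 * v12' p0.2 := by
  obtain ⟨a, b⟩ := p0
  fin_cases a <;> fin_cases b <;>
    norm_num [EM, Bblk, v12', Matrix.cons_val_two, Fintype.sum_prod_type, Fin.sum_univ_three]

lemma emfix13 (p0 : Fin 3 × Fin 3) :
    (∑ p : Fin 3 × Fin 3, EM p0 p * (v13' p.1 * v13' p.2)) = v13' p0.1 * v13' p0.2 := by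
  obtain ⟨a, b⟩ := p0
  fin_cases a <;> fin_cases b <;>
    norm_num [EM, Bblk, v13', Matrix.cons_val_two, Fintype.sum_prod_type, Fin.sum_univ_three]

variable {n : ℕ} (i j : Fin n)

lemma tpow_U (hij : i ≠ j) (v : Fin 3 → ℝ) (y : Fin n → Fin 3) (a b : Fin 3) :
    tpow' n v (U i j y a b) = v a * v b * ∏ k ∈ (Finset.univ.erase i).erase j, v (y k) := by
  unfold tpow'
  have hjmem : j ∈ Finset.univ.erase i := Finset.mem_erase.2 ⟨Ne.symm hij, Finset.mem_univ _⟩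
  rw [← Finset.mul_prod_erase Finset.univ _ (Finset.mem_univ i),
    ← Finset.mul_prod_erase _ _ hjmem, U_at_i, U_at_j i j hij, ← mul_assoc]
  congr 1
  refine Finset.prod_congr rfl fun k hk => ?_
  simp only [Finset.mem_erase] at hk
  rw [U_at_other i j y a b hk.2.1 hk.1]

lemma tpow_fixed (hij : i ≠ j) (v : Fin 3 → ℝ)
    (hv : ∀ p0 : Fin 3 × Fin 3, (∑ p : Fin 3 × Fin 3, EM p0 p * (v p.1 * v p.2)) = v p0.1 * v p0.2) :
    (EMop' n i j).mulVec (tpow' n v) = tpow' n v := by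
  funext y
  have hmap : (EMop' n i j).map ⇑(RingHom.id ℝ) = EMop' n i j := by
    have : ⇑(RingHom.id ℝ) = id := rfl
    rw [this, Matrix.map_id]
  rw [← hmap, ML i j hij]
  have h1 : ∀ p : Fin 3 × Fin 3, (RingHom.id ℝ) (EM (y i, y j) p) * tpow' n v (U i j y p.1 p.2)
      = EM (y i, y j) p * (v p.1 * v p.2) * ∏ k ∈ (Finset.univ.erase i).erase j, v (y k) := by
    intro p
    rw [tpow_U i j hij]
    simp only [RingHom.id_apply]
    ring
  rw [Finset.sum_congr rfl fun p _ => h1 p, ← Finset.sum_mul, hv (y i, y j)]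
  have h2 := tpow_U i j hij v y (y i) (y j)
  rw [U_self] at h2
  simpa using h2.symm

lemma fixed_prod (L : List (Matrix (Fin n → Fin 3) (Fin n → Fin 3) ℝ))
    (t : (Fin n → Fin 3) → ℝ) (h : ∀ A ∈ L, A.mulVec t = t) : L.prod.mulVec t = t := by
  induction L with
  | nil => simp
  | cons A L ih =>
    rw [List.prod_cons, ← Matrix.mulVec_mulVec, ih fun B hB => h B (List.mem_cons_of_mem _ hB),
      h A (List.mem_cons_self)]

end TPOW

lemma EMop_eq : EMop = EMop' := rfl
lemma tpow_eq : tpow = tpow' := rfl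
lemma v12_eq : v12 = v12' := rfl
lemma v13_eq : v13 = v13' := rfl

section FINAL
variable {n : ℕ}

lemma map_mulVec_cast (A : Matrix (Fin n → Fin 3) (Fin n → Fin 3) ℝ) (x : (Fin n → Fin 3) → ℝ)
    (z : Fin n → Fin 3) :
    ((A.map Complex.ofReal).mulVec (fun y => (x y : ℂ))) z = ((A.mulVec x) z : ℂ) := by
  unfold Matrix.mulVec dotProduct
  push_cast
  rfl

lemma charpoly_root_eigen (A : Matrix (Fin n → Fin 3) (Fin n → Fin 3) ℂ) (μ : ℂ)
    (h : A.charpoly.IsRoot μ) : ∃ v, v ≠ 0 ∧ A.mulVec v = μ • v := by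
  have hdet : ((Matrix.diagonal (fun _ => μ)) - A).det = 0 := by
    have h' : (A.charpoly).eval μ = 0 := h
    rw [Matrix.charpoly] at h'
    have h2 : Polynomial.eval μ (A.charmatrix.det)
        = ((A.charmatrix).map (Polynomial.evalRingHom μ)).det :=
      RingHom.map_det (Polynomial.evalRingHom μ) A.charmatrix
    have h3 : (A.charmatrix).map (Polynomial.evalRingHom μ)
        = (Matrix.diagonal (fun _ => μ)) - A := by
      funext a b
      by_cases hab : a = b
      · subst hab
        simp [Matrix.map_apply, Matrix.charmatrix_apply_eq]
      · simp [Matrix.map_apply, Matrix.charmatrix_apply_ne _ _ _ hab,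
          Matrix.diagonal_apply_ne _ hab]
    rw [h2, h3] at h'
    exact h'
  obtain ⟨v, hv0, hv⟩ := Matrix.exists_mulVec_eq_zero_iff.2 hdet
  refine ⟨v, hv0, ?_⟩
  rw [Matrix.sub_mulVec] at hv
  have hdiag : (Matrix.diagonal (fun _ => μ)).mulVec v = μ • v := by
    funext z
    rw [Matrix.mulVec_diagonal]
    simp
  rw [hdiag] at hv
  have := sub_eq_zero.1 hv
  rw [← this]

end FINAL


/-- for `n ≥ 3`, the layer operator
`LT = EM_{n,1} ∘ EM_{n−1,n} ∘ ⋯ ∘ EM_{2,3} ∘ EM_{1,2}` has `1` as an eigenvalue, its eigenspace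
`{x : LT·x = x}` equals `span{v₁₂^{⊗n}, v₁₃^{⊗n}}` (in particular the eigenvalue `1` has
geometric multiplicity `2`), and every complex eigenvalue `λ ≠ 1` of `LT` satisfies `|λ| < 1`. -/
theorem stmt13 (n : ℕ) (hn : 3 ≤ n)
    (LT : Matrix (Fin n → Fin 3) (Fin n → Fin 3) ℝ)
    (hLT : LT =
      ((List.ofFn fun i : Fin n => EMop n i (i + ⟨1, by omega⟩)).reverse).prod) :
    (∃ x : (Fin n → Fin 3) → ℝ, x ≠ 0 ∧ LT.mulVec x = x) ∧
    ({x : (Fin n → Fin 3) → ℝ | LT.mulVec x = x} =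
      ↑(Submodule.span ℝ {tpow n v12, tpow n v13})) ∧
    (Module.finrank ℝ ↥(Submodule.span ℝ {tpow n v12, tpow n v13}) = 2) ∧
    (∀ μ : ℂ, ((LT.map (Complex.ofReal)).charpoly).IsRoot μ → μ ≠ 1 → ‖μ‖ < 1) := by
  haveI : NeZero n := ⟨by omega⟩
  have hone : (⟨1, by omega⟩ : Fin n) = (1 : Fin n) := fin_one_val hn
  have hLT' : LT = ((List.ofFn fun i : Fin n => EMop' n i (i + 1)).reverse).prod := by
    rw [hLT, EMop_eq]
    congr 2
    exact congrArg _ (funext fun i => by rw [hone])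
  -- the complexified list
  set Lc : List (Matrix (Fin n → Fin 3) (Fin n → Fin 3) ℂ) :=
    (List.ofFn fun i : Fin n => Mc i (i + 1)).reverse with hLc
  have hA : LT.map Complex.ofReal = Lc.prod := by
    have h1 : LT.map Complex.ofReal
        = (Complex.ofRealHom.mapMatrix : Matrix (Fin n → Fin 3) (Fin n → Fin 3) ℝ →+*
            Matrix (Fin n → Fin 3) (Fin n → Fin 3) ℂ)
          ((List.ofFn fun i : Fin n => EMop' n i (i + 1)).reverse).prod := by
      rw [hLT']; rfl
    rw [h1, map_list_prod, hLc]
    congr 1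
    rw [List.map_reverse, List.map_ofFn]
    rfl
  have hmem : ∀ B ∈ Lc,
      (∀ x, S (B.mulVec x) ≤ S x) ∧ (∀ x, S (B.mulVec x) = S x → B.mulVec x = x) := by
    intro B hB
    rw [hLc, List.mem_reverse, List.mem_ofFn] at hB
    obtain ⟨i, rfl⟩ := hB
    have hij : i ≠ i + 1 := succ_ne hn i
    exact ⟨step_le i (i + 1) hij, fun x hx => (step_eq i (i + 1) hij x hx).2⟩
  -- the fixed tensor powers
  have hfix12 : LT.mulVec (tpow' n v12') = tpow' n v12' := by
    rw [hLT']
    refine fixed_prod _ _ fun B hB => ?_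
    rw [List.mem_reverse, List.mem_ofFn] at hB
    obtain ⟨i, rfl⟩ := hB
    exact tpow_fixed i (i + 1) (succ_ne hn i) v12' emfix12
  have hfix13 : LT.mulVec (tpow' n v13') = tpow' n v13' := by
    rw [hLT']
    refine fixed_prod _ _ fun B hB => ?_
    rw [List.mem_reverse, List.mem_ofFn] at hB
    obtain ⟨i, rfl⟩ := hB
    exact tpow_fixed i (i + 1) (succ_ne hn i) v13' emfix13
  have huniv : (Finset.univ : Finset (Fin n)).Nonempty := ⟨⟨0, by omega⟩, Finset.mem_univ _⟩
  have hval12 : tpow' n v12' (fun _ => 1) = 1 :=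
    Finset.prod_eq_one fun k _ => by norm_num [v12']
  have hval12' : tpow' n v12' (fun _ => 2) = 0 :=
    Finset.prod_eq_zero (Finset.mem_univ huniv.choose) (by norm_num [v12', Matrix.cons_val_two])
  have hval13 : tpow' n v13' (fun _ => 2) = 1 :=
    Finset.prod_eq_one fun k _ => by norm_num [v13', Matrix.cons_val_two]
  have hval13' : tpow' n v13' (fun _ => 1) = 0 :=
    Finset.prod_eq_zero (Finset.mem_univ huniv.choose) (by norm_num [v13'])
  have h12ne : tpow' n v12' ≠ 0 := by
    intro h
    have := congrFun h (fun _ => 1)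
    rw [hval12] at this
    norm_num at this
  -- part 2 forward direction
  have hforward : ∀ x : (Fin n → Fin 3) → ℝ, LT.mulVec x = x →
      x = x (fun _ => 1) • tpow' n v12' + x (fun _ => 2) • tpow' n v13' := by
    intro x hx
    set xc : (Fin n → Fin 3) → ℂ := fun y => (x y : ℂ) with hxc
    have hfixc : Lc.prod.mulVec xc = xc := by
      rw [← hA]
      funext z
      rw [hxc]
      show ((LT.map Complex.ofReal).mulVec (fun y => (x y : ℂ))) z = _
      rw [map_mulVec_cast, hx]
    have hall := ((chain Lc hmem xc).2 (by rw [hfixc])).2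
    have hcond : ∀ i : Fin n, CondR i (i + 1) x := by
      intro i
      have hij : i ≠ i + 1 := succ_ne hn i
      have hBi : Mc i (i + 1) ∈ Lc := by
        rw [hLc, List.mem_reverse, List.mem_ofFn]
        exact ⟨i, rfl⟩
      have hfixi := hall _ hBi
      have hcondc := (step_eq i (i + 1) hij xc (by rw [hfixi])).1
      intro y
      obtain ⟨c1, c2, c3, c4, c5⟩ := hcondc y
      refine ⟨?_, ?_, ?_, ?_, ?_⟩
      · exact_mod_cast (show ((x (U i (i+1) y 0 0) : ℂ)) = (x (U i (i+1) y 0 1) : ℂ)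
          + (x (U i (i+1) y 0 2) : ℂ) from c1)
      · exact_mod_cast (show ((x (U i (i+1) y 1 0) : ℂ)) = (x (U i (i+1) y 1 1) : ℂ) from c2)
      · exact_mod_cast (show ((x (U i (i+1) y 1 2) : ℂ)) = 0 from c3)
      · exact_mod_cast (show ((x (U i (i+1) y 2 0) : ℂ)) = (x (U i (i+1) y 2 2) : ℂ) from c4)
      · exact_mod_cast (show ((x (U i (i+1) y 2 1) : ℂ)) = 0 from c5)
    exact comb hn hcond
  refine ⟨⟨tpow n v12, by rw [tpow_eq, v12_eq]; exact h12ne, by rw [tpow_eq, v12_eq]; exact hfix12⟩,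
    ?_, ?_, ?_⟩
  · -- eigenspace equality
    ext x
    simp only [Set.mem_setOf_eq, SetLike.mem_coe]
    constructor
    · intro hx
      rw [Submodule.mem_span_pair]
      exact ⟨x (fun _ => 1), x (fun _ => 2), by
        rw [tpow_eq, v12_eq, v13_eq]; exact (hforward x hx).symm⟩
    · intro hx
      rw [Submodule.mem_span_pair] at hx
      obtain ⟨c, d, rfl⟩ := hx
      rw [Matrix.mulVec_add, Matrix.mulVec_smul, Matrix.mulVec_smul]
      rw [tpow_eq, v12_eq, v13_eq, hfix12, hfix13]
  · -- finrank
    have hli : LinearIndependent ℝ ![tpow' n v12', tpow' n v13'] := by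
      rw [LinearIndependent.pair_iff]
      intro s t hst
      constructor
      · have h1 := congrFun hst (fun _ => 1)
        simp only [Pi.add_apply, Pi.smul_apply, smul_eq_mul, Pi.zero_apply, hval12, hval13'] at h1
        linarith
      · have h2 := congrFun hst (fun _ => 2)
        simp only [Pi.add_apply, Pi.smul_apply, smul_eq_mul, Pi.zero_apply, hval12', hval13] at h2
        linarith
    have hrange : Set.range ![tpow' n v12', tpow' n v13'] = {tpow n v12, tpow n v13} := by
      rw [tpow_eq, v12_eq, v13_eq]
      ext z
      simp [Matrix.range_cons, Matrix.range_empty]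
      tauto
    rw [← hrange, finrank_span_eq_card hli]
    simp
  · -- spectral radius
    intro μ hroot hμ1
    obtain ⟨v, hv0, hv⟩ := charpoly_root_eigen (LT.map Complex.ofReal) μ hroot
    rw [hA] at hv
    have hSle := (chain Lc hmem v).1
    rw [hv, S_smul] at hSle
    have hSv := S_pos v hv0
    have h1 : Complex.normSq μ ≤ 1 := by nlinarith
    have h2 : Complex.normSq μ ≠ 1 := by
      intro heq1
      have hSeq : S (Lc.prod.mulVec v) = S v := by rw [hv, S_smul, heq1, one_mul]
      have hfixv := ((chain Lc hmem v).2 hSeq).1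
      rw [hv] at hfixv
      obtain ⟨y, hy⟩ : ∃ y, v y ≠ 0 := by
        by_contra hcon
        push_neg at hcon
        exact hv0 (funext hcon)
      have hyy := congrFun hfixv y
      simp only [Pi.smul_apply, smul_eq_mul] at hyy
      exact hμ1 (mul_right_cancel₀ hy (by rw [hyy, one_mul]))
    have h3 : Complex.normSq μ < 1 := lt_of_le_of_ne h1 h2
    have h4 := Complex.sq_norm μ
    nlinarith [norm_nonneg μ]
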